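/- Define functions qA, qE : ℕ → ℕ by qA(1) = 1, qE(1) = 2, qA(2) = 2, qE(2) = 2, qE(ℓ) = qA(⌈ℓ/2⌉) + 1 for ℓ ≥ 2, and qA(ℓ) = qE(⌊ℓ/2⌋) + 1 for ℓ ≥ 3. Then for all ℓ ≥ 3, qA(ℓ) = 2 + qA(⌊(ℓ+2)/4⌋). -/
import Mathlib


theorem stmt_1 (qA qE : ℕ → ℕ)
    (hA1 : qA 1 = 1) (hE1 : qE 1 = 2) (hA2 : qA 2 = 2) (hE2 : qE 2 = 2)
    (hE : ∀ ℓ, 2 ≤ ℓ → qE ℓ = qA ((ℓ + 1) / 2) + 1)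
    (hA : ∀ ℓ, 3 ≤ ℓ → qA ℓ = qE (ℓ / 2) + 1) :
    ∀ ℓ, 3 ≤ ℓ → qA ℓ = 2 + qA ((ℓ + 2) / 4) := by
  intro ℓ hℓ
  rcases eq_or_lt_of_le hℓ with h3 | h4
  · rw [← h3, hA 3 (by norm_num)]
    norm_num [hE1, hA1]
  · rw [hA ℓ hℓ, hE (ℓ / 2) (by omega)]
    have h : (ℓ / 2 + 1) / 2 = (ℓ + 2) / 4 := by omega
    rw [h]; ring
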